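/- Fix γ ∈ ℝ with 0 ≤ γ < 1 and define, for each natural number N ≥ 1, g²_N = 1 − 1/N − 2γ²(1 − γ^{2N} − N(1−γ²))/(N²(1−γ²)²). Then N·(g²_N − 1) converges, as N → ∞, to (3γ² − 1)/(1−γ²). In particular, for sufficiently large N, g²_N > 1 if γ > 1/√3 and g²_N < 1 if γ < 1/√3, so the superradiant transition point is asymptotically γ_s = 1/√3 independently of N. -/

import Mathlib

open Filter

/-- For fixed `0 ≤ γ < 1`, with
`g²_N = 1 − 1/N − 2γ²(1 − γ^{2N} − N(1−γ²))/(N²(1−γ²)²)`,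
`N·(g²_N − 1) → (3γ² − 1)/(1−γ²)` as `N → ∞`; in particular for large `N`,
`g²_N > 1` if `γ > 1/√3` and `g²_N < 1` if `γ < 1/√3`. -/
theorem superradiant_transition_exponential_chain (γ : ℝ)
    (h0 : 0 ≤ γ) (h1 : γ < 1)
    (g2 : ℕ → ℝ)
    (hg2 : ∀ N : ℕ, g2 N = 1 - 1 / N
      - 2 * γ ^ 2 * (1 - γ ^ (2 * N) - N * (1 - γ ^ 2))
          / ((N : ℝ) ^ 2 * (1 - γ ^ 2) ^ 2)) :
    Filter.Tendsto (fun N : ℕ => (N : ℝ) * (g2 N - 1)) Filter.atTop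
      (nhds ((3 * γ ^ 2 - 1) / (1 - γ ^ 2))) ∧
    (1 / Real.sqrt 3 < γ → ∀ᶠ N : ℕ in Filter.atTop, 1 < g2 N) ∧
    (γ < 1 / Real.sqrt 3 → ∀ᶠ N : ℕ in Filter.atTop, g2 N < 1) := by
  have hγ2 : γ ^ 2 < 1 := by nlinarith
  have hc : (0:ℝ) < 1 - γ ^ 2 := by linarith
  have hcne : (1 - γ ^ 2) ≠ 0 := ne_of_gt hc
  -- pow tends to zero
  have hp : Tendsto (fun N : ℕ => γ ^ (2 * N)) atTop (nhds 0) := by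
    have : Tendsto (fun N : ℕ => (γ ^ 2) ^ N) atTop (nhds 0) :=
      tendsto_pow_atTop_nhds_zero_of_lt_one (by positivity) hγ2
    simpa [pow_mul] using this
  have hinv : Tendsto (fun N : ℕ => (1:ℝ) / N) atTop (nhds 0) := by
    simpa using (tendsto_one_div_atTop_nhds_zero_nat : Tendsto (fun N : ℕ => (1:ℝ) / N) atTop (nhds 0))
  have hmul : Tendsto (fun N : ℕ => (1 - γ ^ (2 * N)) * (1 / N)) atTop (nhds 0) := by
    have := (((tendsto_const_nhds (x := (1:ℝ))).sub hp).mul hinv)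
    simpa using this
  have hT : Tendsto (fun N : ℕ => (N : ℝ) * (g2 N - 1)) atTop
      (nhds ((3 * γ ^ 2 - 1) / (1 - γ ^ 2))) := by
    have hT' : Tendsto (fun N : ℕ =>
        (3 * γ ^ 2 - 1) / (1 - γ ^ 2)
          - (2 * γ ^ 2 / (1 - γ ^ 2) ^ 2) * ((1 - γ ^ (2 * N)) * (1 / N)))
        atTop (nhds ((3 * γ ^ 2 - 1) / (1 - γ ^ 2))) := by
      have := (tendsto_const_nhds (x := (3 * γ ^ 2 - 1) / (1 - γ ^ 2))).sub
        (Tendsto.mul (tendsto_const_nhds (x := 2 * γ ^ 2 / (1 - γ ^ 2) ^ 2)) hmul)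
      simpa using this
    refine hT'.congr' ?_
    filter_upwards [eventually_ge_atTop 1] with N hN
    have hN0 : (N : ℝ) ≠ 0 := by
      exact_mod_cast Nat.one_le_iff_ne_zero.mp hN
    rw [hg2 N]
    field_simp
    ring
  refine ⟨hT, ?_, ?_⟩
  · intro hγ
    have hsq : (1 / Real.sqrt 3) ^ 2 = 1 / 3 := by
      rw [div_pow, one_pow, Real.sq_sqrt (by norm_num : (3:ℝ) ≥ 0)]
    have hγ3 : 1 / 3 < γ ^ 2 := by
      calc (1:ℝ)/3 = (1 / Real.sqrt 3) ^ 2 := hsq.symm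
        _ < γ ^ 2 := by
          apply pow_lt_pow_left₀ hγ (by positivity)
          norm_num
    have hL : 0 < (3 * γ ^ 2 - 1) / (1 - γ ^ 2) := by
      apply div_pos (by linarith) hc
    filter_upwards [hT.eventually (eventually_gt_nhds hL), eventually_ge_atTop 1]
      with N hNg hN1
    have hN0 : (0:ℝ) < N := by exact_mod_cast hN1
    nlinarith
  · intro hγ
    have hsq : (1 / Real.sqrt 3) ^ 2 = 1 / 3 := by
      rw [div_pow, one_pow, Real.sq_sqrt (by norm_num : (3:ℝ) ≥ 0)]
    have hγ3 : γ ^ 2 < 1 / 3 := by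
      calc γ ^ 2 < (1 / Real.sqrt 3) ^ 2 := by
            apply pow_lt_pow_left₀ hγ h0; norm_num
        _ = 1/3 := hsq
    have hL : (3 * γ ^ 2 - 1) / (1 - γ ^ 2) < 0 := by
      apply div_neg_of_neg_of_pos (by linarith) hc
    filter_upwards [hT.eventually (eventually_lt_nhds hL), eventually_ge_atTop 1]
      with N hNg hN1
    have hN0 : (0:ℝ) < N := by exact_mod_cast hN1
    nlinarith
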